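/- Let X be a nonnegative random variable with E[X²/loglog X] < ∞, where loglog x := ln max(e, ln max(e,x)). Then for every δ > 0 and every p > 2, ∑_{n=1}^∞ E[ (min(X, δ√(n loglog n)))^p ] / (n loglog n)^{p/2} < ∞. -/

import Mathlib

open MeasureTheory

/-- `loglog x = ln (max e (ln (max e x)))`. -/
noncomputable def loglog (x : ℝ) : ℝ :=
  Real.log (max (Real.exp 1) (Real.log (max (Real.exp 1) x)))

namespace TMS

noncomputable def ell (x : ℝ) : ℝ := Real.log (max (Real.exp 1) x)

lemma loglog_eq (x : ℝ) : loglog x = ell (ell x) := rfl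

lemma epos : (0:ℝ) < Real.exp 1 := Real.exp_pos 1

lemma max_pos (x : ℝ) : (0:ℝ) < max (Real.exp 1) x := lt_of_lt_of_le epos (le_max_left _ _)

lemma one_le_ell (x : ℝ) : 1 ≤ ell x := by
  have := Real.log_le_log epos (le_max_left (Real.exp 1) x)
  rwa [Real.log_exp] at this

lemma ell_pos (x : ℝ) : 0 < ell x := lt_of_lt_of_le one_pos (one_le_ell x)

lemma ell_mono : Monotone ell := fun a b hab =>
  Real.log_le_log (max_pos a) (max_le_max le_rfl hab)

lemma ell_le_self {x : ℝ} (hx : 1 ≤ x) : ell x ≤ x := by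
  rcases le_total x (Real.exp 1) with h | h
  · rw [ell, max_eq_left h, Real.log_exp]; exact hx
  · rw [ell, max_eq_right h]
    exact Real.log_le_self (by linarith [epos])

lemma ell_mul_le {s t : ℝ} (hs : 0 ≤ s) (ht : 0 ≤ t) : ell (s * t) ≤ ell s + ell t := by
  have h1 : max (Real.exp 1) (s * t) ≤ max (Real.exp 1) s * max (Real.exp 1) t := by
    apply max_le
    · have hm : Real.exp 1 * Real.exp 1 ≤ max (Real.exp 1) s * max (Real.exp 1) t :=
        mul_le_mul (le_max_left _ _) (le_max_left _ _) epos.le (le_of_lt (max_pos s))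
      nlinarith [epos, Real.add_one_le_exp (1:ℝ)]
    · exact mul_le_mul (le_max_right _ _) (le_max_right _ _) ht (le_of_lt (max_pos s))
  calc ell (s * t) ≤ Real.log (max (Real.exp 1) s * max (Real.exp 1) t) :=
        Real.log_le_log (max_pos _) h1
    _ = ell s + ell t := Real.log_mul (ne_of_gt (max_pos s)) (ne_of_gt (max_pos t))

lemma one_le_loglog (x : ℝ) : 1 ≤ loglog x := one_le_ell _

lemma loglog_pos (x : ℝ) : 0 < loglog x := ell_pos _

lemma loglog_mono : Monotone loglog := fun a b hab => ell_mono (ell_mono hab)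

lemma loglog_le_self {x : ℝ} (hx : 1 ≤ x) : loglog x ≤ x :=
  le_trans (ell_le_self (one_le_ell x)) (ell_le_self hx)

lemma loglog_mul_le {s t : ℝ} (hs : 0 ≤ s) (ht : 0 ≤ t) :
    loglog (s * t) ≤ loglog s + loglog t + 1 := by
  have h1 : ell (ell (s * t)) ≤ ell (ell s + ell t) := ell_mono (ell_mul_le hs ht)
  have hA := one_le_ell s
  have hB := one_le_ell t
  have hAB : 1 ≤ ell s * ell t := by nlinarith
  have he2 : 2 ≤ Real.exp 1 := by have := Real.add_one_le_exp (1:ℝ); linarith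
  have h2 : ell (ell s + ell t) ≤ Real.log (Real.exp 1 * (ell s * ell t)) := by
    apply Real.log_le_log (max_pos _)
    apply max_le
    · nlinarith [epos, hAB]
    · nlinarith [he2, hAB]
  have h3 : Real.log (Real.exp 1 * (ell s * ell t)) = 1 + (Real.log (ell s) + Real.log (ell t)) := by
    rw [Real.log_mul (ne_of_gt epos) (by positivity), Real.log_mul (by positivity) (by positivity),
      Real.log_exp]
  have h4 : Real.log (ell s) ≤ ell (ell s) := Real.log_le_log (ell_pos s) (le_max_right _ _)
  have h5 : Real.log (ell t) ≤ ell (ell t) := Real.log_le_log (ell_pos t) (le_max_right _ _)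
  calc loglog (s*t) = ell (ell (s*t)) := rfl
    _ ≤ 1 + (Real.log (ell s) + Real.log (ell t)) := by rw [← h3]; exact le_trans h1 h2
    _ ≤ loglog s + loglog t + 1 := by rw [loglog_eq, loglog_eq]; linarith

lemma key_ineq {r u v : ℝ} (hr : 1 < r) (hu : 0 < u) (huv : u ≤ v) :
    (r - 1) * (v - u) * v ^ (-r) ≤ u ^ (1 - r) - v ^ (1 - r) := by
  have hv : 0 < v := lt_of_lt_of_le hu huv
  have ht1 : 1 ≤ v / u := (one_le_div hu).2 huv
  have hbern : 1 + r * (v / u - 1) ≤ (v / u) ^ r := by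
    have h := one_add_mul_self_le_rpow_one_add (s := v / u - 1) (by linarith) (p := r) hr.le
    simpa using h
  have h1 : u + r * (v - u) ≤ u * (v / u) ^ r := by
    have h := mul_le_mul_of_nonneg_left hbern hu.le
    have huv' : u * (v / u) = v := by field_simp
    nlinarith
  have hvr : (0:ℝ) < v ^ r := Real.rpow_pos_of_pos hv r
  rw [Real.rpow_neg hv.le, ← div_eq_mul_inv, div_le_iff₀ hvr]
  have e1 : v ^ (1 - r) * v ^ r = v := by
    rw [← Real.rpow_add hv]; norm_num
  have e2 : u ^ (1 - r) * v ^ r = u * (v / u) ^ r := by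
    rw [Real.div_rpow hv.le hu.le, sub_eq_add_neg, Real.rpow_add hu, Real.rpow_one,
      Real.rpow_neg hu.le]
    field_simp
  nlinarith [h1, e1, e2]


set_option maxHeartbeats 2000000 in
lemma main_bound (δ p : ℝ) (hδ : 0 < δ) (hp : 2 < p) :
    ∃ C : ℝ, 0 < C ∧ ∀ x : ℝ, 0 ≤ x → ∀ s : Finset ℕ,
      ∑ n ∈ s, (min x (δ * Real.sqrt (((n : ℝ) + 1) * loglog ((n : ℝ) + 1)))) ^ p /
          (((n : ℝ) + 1) * loglog ((n : ℝ) + 1)) ^ (p / 2)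
        ≤ C * (1 + x ^ 2 / loglog x) := by
  classical
  set r : ℝ := p / 2 with hrdef
  have hr1 : 1 < r := by rw [hrdef]; linarith
  have hrm : 0 < r - 1 := by linarith
  have hppos : 0 < p := by linarith
  set K : ℝ := 2 + loglog δ with hKdef
  have hK1 : 1 ≤ K := by have := one_le_loglog δ; simp only [hKdef]; linarith
  have hKpos : 0 < K := by linarith
  have hδp : 0 < δ ^ p := Real.rpow_pos_of_pos hδ p
  have hδp1 : 0 < δ ^ (p - 1) := Real.rpow_pos_of_pos hδ _
  have hδp2 : 0 < δ ^ (p - 2) := Real.rpow_pos_of_pos hδ _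
  have hrinv : 0 < 1 / (r - 1) := by positivity
  set C : ℝ := 2 * δ ^ p + δ ^ (p - 1) + δ ^ (p - 2) * K * (1 + 1 / (r - 1)) with hCdef
  have hD0 : 0 < δ ^ (p - 2) * K * (1 + 1 / (r - 1)) := by
    apply mul_pos (mul_pos hδp2 hKpos); linarith
  have hCpos : 0 < C := by simp only [hCdef]; nlinarith
  refine ⟨C, hCpos, ?_⟩
  intro x hx s
  set b : ℕ → ℝ := fun n => ((n : ℝ) + 1) * loglog ((n : ℝ) + 1) with hbdef
  have hb1 : ∀ n : ℕ, 1 ≤ b n := by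
    intro n
    have h1 : (1 : ℝ) ≤ (n : ℝ) + 1 := by
      have := Nat.cast_nonneg (α := ℝ) n; linarith
    have h2 := one_le_loglog ((n : ℝ) + 1)
    simp only [hbdef]; nlinarith
  have hbpos : ∀ n, 0 < b n := fun n => lt_of_lt_of_le one_pos (hb1 n)
  have hbmono : ∀ m n : ℕ, m ≤ n → b m ≤ b n := by
    intro m n hmn
    have hc : ((m : ℝ) + 1) ≤ ((n : ℝ) + 1) := by
      have : (m : ℝ) ≤ (n : ℝ) := by exact_mod_cast hmn
      linarith
    have h1 := loglog_mono hc
    have h2 := one_le_loglog ((m : ℝ) + 1)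
    simp only [hbdef]; nlinarith
  have hbsq : ∀ n : ℕ, b n ≤ ((n : ℝ) + 1) ^ 2 := by
    intro n
    have h1 : (1 : ℝ) ≤ (n : ℝ) + 1 := by
      have := Nat.cast_nonneg (α := ℝ) n; linarith
    have h2 := loglog_le_self h1
    simp only [hbdef]; nlinarith [one_le_loglog ((n : ℝ) + 1)]
  set q : ℝ := x ^ 2 / loglog x with hqdef
  have hLxpos : 0 < loglog x := loglog_pos x
  have hq0 : 0 ≤ q := div_nonneg (by positivity) hLxpos.le
  set T : ℕ → ℝ := fun n => (min x (δ * Real.sqrt (b n))) ^ p / b n ^ r with hTdef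
  by_cases hx0 : x = 0
  · subst hx0
    have hz : ∑ n ∈ s, T n = 0 := by
      apply Finset.sum_eq_zero
      intro n _
      simp only [hTdef]
      rw [min_eq_left (mul_nonneg hδ.le (Real.sqrt_nonneg _)),
        Real.zero_rpow (ne_of_gt hppos), zero_div]
    rw [hz]
    have : q = 0 := by simp only [hqdef]; norm_num
    rw [this]
    nlinarith
  have hxpos : 0 < x := lt_of_le_of_ne hx (Ne.symm hx0)
  set B : ℝ := (x / δ) ^ 2 with hBdef
  have hBpos : 0 < B := by positivity
  have hLK : loglog x ≤ K * loglog (x / δ) := by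
    have hxe : (x / δ) * δ = x := by field_simp
    have h := loglog_mul_le (s := x / δ) (t := δ) (by positivity) hδ.le
    rw [hxe] at h
    have h1 := one_le_loglog (x / δ)
    have h2 := one_le_loglog δ
    simp only [hKdef]; nlinarith
  have hL0pos : 0 < loglog (x / δ) := loglog_pos _
  -- uniform bounds on terms
  have hTle : ∀ n, T n ≤ δ ^ p := by
    intro n
    have hminnn : 0 ≤ min x (δ * Real.sqrt (b n)) :=
      le_min hx (mul_nonneg hδ.le (Real.sqrt_nonneg _))
    have h1 : (min x (δ * Real.sqrt (b n))) ^ p ≤ (δ * Real.sqrt (b n)) ^ p :=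
      Real.rpow_le_rpow hminnn (min_le_right _ _) hppos.le
    have h2 : (δ * Real.sqrt (b n)) ^ p = δ ^ p * b n ^ r := by
      rw [Real.mul_rpow hδ.le (Real.sqrt_nonneg _), Real.sqrt_eq_rpow,
        ← Real.rpow_mul (hbpos n).le]
      congr 1
      rw [hrdef]; ring
    have hbr : 0 < b n ^ r := Real.rpow_pos_of_pos (hbpos n) r
    simp only [hTdef]
    calc (min x (δ * Real.sqrt (b n))) ^ p / b n ^ r
        ≤ (δ ^ p * b n ^ r) / b n ^ r := by
          apply div_le_div_of_nonneg_right _ hbr.le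
          rw [← h2]; exact h1
      _ = δ ^ p := by field_simp
  have hTlex : ∀ n, T n ≤ x ^ p / b n ^ r := by
    intro n
    have hminnn : 0 ≤ min x (δ * Real.sqrt (b n)) :=
      le_min hx (mul_nonneg hδ.le (Real.sqrt_nonneg _))
    have h1 : (min x (δ * Real.sqrt (b n))) ^ p ≤ x ^ p :=
      Real.rpow_le_rpow hminnn (min_le_left _ _) hppos.le
    have hbr : 0 < b n ^ r := Real.rpow_pos_of_pos (hbpos n) r
    simp only [hTdef]
    exact div_le_div_of_nonneg_right h1 hbr.le
  -- the threshold M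
  set M : ℝ := x / δ + B * K / loglog x with hMdef
  have hM0 : 0 ≤ M := by positivity
  have hmemM : ∀ n : ℕ, b n < B → (n : ℝ) + 1 < M := by
    intro n hn
    rcases lt_or_ge ((n : ℝ) + 1) (x / δ) with h | h
    · have h0 : 0 ≤ B * K / loglog x := by positivity
      simp only [hMdef]; linarith
    · have hL : loglog (x / δ) ≤ loglog ((n : ℝ) + 1) := loglog_mono h
      have hLn : 0 < loglog ((n : ℝ) + 1) := loglog_pos _
      have h1 : ((n : ℝ) + 1) < B / loglog ((n : ℝ) + 1) := by
        rw [lt_div_iff₀ hLn]; exact hn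
      have h2 : B / loglog ((n : ℝ) + 1) ≤ B * K / loglog x := by
        rw [div_le_div_iff₀ hLn hLxpos]
        have h3 : loglog x ≤ K * loglog ((n : ℝ) + 1) := by nlinarith
        nlinarith
      have h4 : 0 ≤ x / δ := by positivity
      simp only [hMdef]; linarith
  set Q : ℕ → Prop := fun n => n = 0 ∨ b (n - 1) < B with hQdef
  have hQsub : s.filter Q ⊆ Finset.range (⌈M⌉₊ + 1) := by
    intro n hn
    rw [Finset.mem_filter] at hn
    rw [Finset.mem_range]
    rcases hn.2 with h0 | hlt
    · omega
    · have h1 : ((n - 1 : ℕ) : ℝ) + 1 < M := hmemM _ hlt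
      have h2 : (n - 1 : ℕ) < ⌈M⌉₊ := by
        rw [Nat.lt_ceil]; linarith
      omega
  have hsum1 : ∑ n ∈ s.filter Q, T n ≤ δ ^ p * (M + 2) := by
    have hcard : ((s.filter Q).card : ℝ) ≤ M + 2 := by
      have h1 : (s.filter Q).card ≤ ⌈M⌉₊ + 1 := by
        have := Finset.card_le_card hQsub
        rwa [Finset.card_range] at this
      have h2 : (⌈M⌉₊ : ℝ) < M + 1 := Nat.ceil_lt_add_one hM0
      have h3 : ((s.filter Q).card : ℝ) ≤ (⌈M⌉₊ : ℝ) + 1 := by exact_mod_cast h1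
      linarith
    calc ∑ n ∈ s.filter Q, T n ≤ ∑ _n ∈ s.filter Q, δ ^ p :=
          Finset.sum_le_sum fun n _ => hTle n
      _ = ((s.filter Q).card : ℝ) * δ ^ p := by rw [Finset.sum_const, nsmul_eq_mul]
      _ ≤ (M + 2) * δ ^ p := mul_le_mul_of_nonneg_right hcard hδp.le
      _ = δ ^ p * (M + 2) := mul_comm _ _
  -- part 2 : the telescoping sum
  set G : ℕ → ℝ := fun m => (max (b m) B) ^ (1 - r) with hGdef
  have hmaxpos : ∀ m, 0 < max (b m) B := fun m => lt_of_lt_of_le (hbpos m) (le_max_left _ _)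
  have hGanti : ∀ m k : ℕ, m ≤ k → G k ≤ G m := fun m k hmk =>
    Real.rpow_le_rpow_of_nonpos (hmaxpos m) (max_le_max (hbmono m k hmk) le_rfl) (by linarith)
  have hGnonneg : ∀ m, 0 ≤ G m := fun m => Real.rpow_nonneg (hmaxpos m).le _
  have hstep : ∀ n ∈ s.filter (fun n => ¬ Q n),
      T n ≤ x ^ p / ((r - 1) * loglog (x / δ)) * (G (n - 1) - G n) := by
    intro n hn
    rw [Finset.mem_filter] at hn
    have hn2 := hn.2
    simp only [hQdef] at hn2
    push_neg at hn2
    obtain ⟨hn0, hnB'⟩ := hn2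
    obtain ⟨m, rfl⟩ : ∃ m, n = m + 1 := ⟨n - 1, by omega⟩
    have hm1 : m + 1 - 1 = m := by omega
    rw [hm1] at hnB' ⊢
    have hnB : B ≤ b m := hnB'
    -- casts
    have hc1 : ((m + 1 : ℕ) : ℝ) = (m : ℝ) + 1 := by push_cast; ring
    have hbm1 : b (m + 1) = ((m : ℝ) + 1 + 1) * loglog ((m : ℝ) + 1 + 1) := by
      simp only [hbdef]; rw [hc1]
    -- gap lower bound
    have hxm : x / δ ≤ (m : ℝ) + 1 := by
      have h1 : B ≤ ((m : ℝ) + 1) ^ 2 := le_trans hnB (hbsq m)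
      simp only [hBdef] at h1
      have h2 : 0 ≤ x / δ := by positivity
      have h3 : (0 : ℝ) ≤ (m : ℝ) + 1 := by positivity
      nlinarith
    have hmono2 : loglog ((m : ℝ) + 1) ≤ loglog ((m : ℝ) + 1 + 1) := loglog_mono (by linarith)
    have hL1 : loglog (x / δ) ≤ loglog ((m : ℝ) + 1 + 1) :=
      loglog_mono (by linarith)
    have hgap : loglog (x / δ) ≤ b (m + 1) - b m := by
      rw [hbm1, hbdef]
      have h1 := one_le_loglog ((m : ℝ) + 1)
      have h2 : (0 : ℝ) ≤ (m : ℝ) := Nat.cast_nonneg m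
      nlinarith
    -- key inequality
    have hkey := key_ineq hr1 (hbpos m) (hbmono m (m + 1) (Nat.le_succ m))
    have hGm : G m = b m ^ (1 - r) := by simp only [hGdef]; rw [max_eq_left hnB]
    have hGm1 : G (m + 1) = b (m + 1) ^ (1 - r) := by
      simp only [hGdef]; rw [max_eq_left (le_trans hnB (hbmono m (m + 1) (Nat.le_succ m)))]
    have hbrneg : 0 ≤ b (m + 1) ^ (-r) := Real.rpow_nonneg (hbpos (m + 1)).le _
    have h5 : (r - 1) * loglog (x / δ) * b (m + 1) ^ (-r) ≤ G m - G (m + 1) := by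
      rw [hGm, hGm1]
      have h6 : (r - 1) * loglog (x / δ) * b (m + 1) ^ (-r)
          ≤ (r - 1) * (b (m + 1) - b m) * b (m + 1) ^ (-r) := by
        apply mul_le_mul_of_nonneg_right _ hbrneg
        nlinarith
      linarith
    -- conclude
    have hxp : 0 ≤ x ^ p := Real.rpow_nonneg hx p
    have h7 : b (m + 1) ^ (-r) ≤ (G m - G (m + 1)) / ((r - 1) * loglog (x / δ)) := by
      rw [le_div_iff₀ (by positivity)]
      calc b (m + 1) ^ (-r) * ((r - 1) * loglog (x / δ))
          = (r - 1) * loglog (x / δ) * b (m + 1) ^ (-r) := by ring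
        _ ≤ G m - G (m + 1) := h5
    calc T (m + 1) ≤ x ^ p / b (m + 1) ^ r := hTlex (m + 1)
      _ = x ^ p * b (m + 1) ^ (-r) := by
          rw [Real.rpow_neg (hbpos (m + 1)).le, div_eq_mul_inv]
      _ ≤ x ^ p * ((G m - G (m + 1)) / ((r - 1) * loglog (x / δ))) :=
          mul_le_mul_of_nonneg_left h7 hxp
      _ = x ^ p / ((r - 1) * loglog (x / δ)) * (G m - G (m + 1)) := by ring
  have htel : ∑ n ∈ s.filter (fun n => ¬ Q n), (G (n - 1) - G n) ≤ B ^ (1 - r) := by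
    set s' := s.filter (fun n => ¬ Q n) with hs'
    have hge1 : ∀ n ∈ s', 1 ≤ n := by
      intro n hn
      rw [hs', Finset.mem_filter, hQdef] at hn
      push_neg at hn
      omega
    set N : ℕ := s.sup id + 1 with hN
    have himg : s'.image (fun n => n - 1) ⊆ Finset.range N := by
      intro i hi
      rw [Finset.mem_image] at hi
      obtain ⟨n, hn, rfl⟩ := hi
      rw [Finset.mem_range, hN]
      have : n ≤ s.sup id := Finset.le_sup (f := id) (Finset.mem_of_mem_filter n hn)
      omega
    have hinj : Set.InjOn (fun n => n - 1) ↑s' := by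
      intro a ha b' hb' hab
      have h1 := hge1 a (by exact_mod_cast ha)
      have h2 := hge1 b' (by exact_mod_cast hb')
      simp only at hab
      omega
    calc ∑ n ∈ s', (G (n - 1) - G n)
        = ∑ n ∈ s', (G (n - 1) - G (n - 1 + 1)) := by
          apply Finset.sum_congr rfl
          intro n hn
          have := hge1 n hn
          congr 2
          omega
      _ = ∑ i ∈ s'.image (fun n => n - 1), (G i - G (i + 1)) := by
          rw [Finset.sum_image (fun a ha b' hb' h => hinj ha hb' h)]
      _ ≤ ∑ i ∈ Finset.range N, (G i - G (i + 1)) := by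
          apply Finset.sum_le_sum_of_subset_of_nonneg himg
          intro i _ _
          have := hGanti i (i + 1) (Nat.le_succ i)
          linarith
      _ = G 0 - G N := Finset.sum_range_sub' G N
      _ ≤ G 0 := by have := hGnonneg N; linarith
      _ ≤ B ^ (1 - r) := by
          simp only [hGdef]
          exact Real.rpow_le_rpow_of_nonpos hBpos (le_max_right _ _) (by linarith)
  -- the algebraic identity x^p * B^(1-r) = x^2 * δ^(p-2)
  have hfact : x ^ p * B ^ (1 - r) = x ^ 2 * δ ^ (p - 2) := by
    have h1 : B ^ (1 - r) = (x / δ) ^ (2 - p) := by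
      simp only [hBdef]
      rw [← Real.rpow_natCast (x / δ) 2, ← Real.rpow_mul (by positivity : (0:ℝ) ≤ x / δ)]
      congr 1
      rw [hrdef]; push_cast; ring
    have h2 : (x / δ) ^ (2 - p) = x ^ (2 - p) * δ ^ (p - 2) := by
      rw [Real.div_rpow hx hδ.le, div_eq_mul_inv, ← Real.rpow_neg hδ.le]
      norm_num
    have h3 : x ^ p * x ^ (2 - p) = x ^ 2 := by
      rw [← Real.rpow_natCast x 2, ← Real.rpow_add hxpos]
      norm_num
    rw [h1, h2, ← mul_assoc, h3]
  have hden : 0 < (r - 1) * loglog (x / δ) := mul_pos hrm hL0pos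
  have hsum2 : ∑ n ∈ s.filter (fun n => ¬ Q n), T n ≤ δ ^ (p - 2) * K / (r - 1) * q := by
    calc ∑ n ∈ s.filter (fun n => ¬ Q n), T n
        ≤ ∑ n ∈ s.filter (fun n => ¬ Q n),
            x ^ p / ((r - 1) * loglog (x / δ)) * (G (n - 1) - G n) :=
          Finset.sum_le_sum hstep
      _ = x ^ p / ((r - 1) * loglog (x / δ)) *
            ∑ n ∈ s.filter (fun n => ¬ Q n), (G (n - 1) - G n) := by
          rw [Finset.mul_sum]
      _ ≤ x ^ p / ((r - 1) * loglog (x / δ)) * B ^ (1 - r) :=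
          mul_le_mul_of_nonneg_left htel
            (div_nonneg (Real.rpow_nonneg hx p) hden.le)
      _ ≤ δ ^ (p - 2) * K / (r - 1) * q := by
          rw [div_mul_eq_mul_div, hfact, div_le_iff₀ hden]
          simp only [hqdef]
          have hexp : δ ^ (p - 2) * K / (r - 1) * (x ^ 2 / loglog x) * ((r - 1) * loglog (x / δ))
              = (δ ^ (p - 2) * x ^ 2) * ((K * loglog (x / δ)) / loglog x) := by
            field_simp
          rw [hexp]
          have h8 : 1 ≤ (K * loglog (x / δ)) / loglog x := by
            rw [le_div_iff₀ hLxpos]; linarith [hLK]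
          nlinarith [mul_nonneg hδp2.le (sq_nonneg x)]
  -- final assembly
  have hxq : x ≤ 1 + q := by
    rcases le_total x 1 with h | h
    · linarith
    · have h1 : loglog x ≤ x := loglog_le_self h
      have h2 : x ≤ x ^ 2 / loglog x := by
        rw [le_div_iff₀ hLxpos]
        nlinarith
      simp only [hqdef]; linarith
  have hd1 : δ ^ (p - 1) = δ ^ p / δ := by
    rw [Real.rpow_sub hδ, Real.rpow_one]
  have hd2 : δ ^ (p - 2) = δ ^ p / (δ * δ) := by
    rw [Real.rpow_sub hδ, show (2:ℝ) = 1 + 1 by norm_num, Real.rpow_add hδ, Real.rpow_one]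
  have hMval : δ ^ p * (M + 2) = δ ^ (p - 1) * x + δ ^ (p - 2) * K * q + 2 * δ ^ p := by
    simp only [hMdef, hBdef, hqdef, hd1, hd2]
    field_simp
  have hTsum : ∑ n ∈ s, (min x (δ * Real.sqrt (((n : ℝ) + 1) * loglog ((n : ℝ) + 1)))) ^ p /
      (((n : ℝ) + 1) * loglog ((n : ℝ) + 1)) ^ r = ∑ n ∈ s, T n := by
    apply Finset.sum_congr rfl
    intro n _
    simp only [hTdef, hbdef]
  rw [hTsum]
  calc ∑ n ∈ s, T n
      = ∑ n ∈ s.filter Q, T n + ∑ n ∈ s.filter (fun n => ¬ Q n), T n :=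
        (Finset.sum_filter_add_sum_filter_not s Q T).symm
    _ ≤ δ ^ p * (M + 2) + δ ^ (p - 2) * K / (r - 1) * q := add_le_add hsum1 hsum2
    _ = δ ^ (p - 1) * x + δ ^ (p - 2) * K * q + 2 * δ ^ p + δ ^ (p - 2) * K / (r - 1) * q := by
        rw [hMval]
    _ ≤ C * (1 + q) := by
        clear_value C q r K
        have h1 : δ ^ (p - 1) * x ≤ δ ^ (p - 1) * (1 + q) :=
          mul_le_mul_of_nonneg_left hxq hδp1.le
        have hCq : C * (1 + q) = 2 * δ ^ p + δ ^ (p - 1) + δ ^ (p - 2) * K * (1 + 1 / (r - 1))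
            + (2 * δ ^ p + δ ^ (p - 1) + δ ^ (p - 2) * K * (1 + 1 / (r - 1))) * q := by
          simp only [hCdef]; ring
        have hd : 0 < δ ^ (p - 2) * K := mul_pos hδp2 hKpos
        have hdi : 0 ≤ δ ^ (p - 2) * K * (1 / (r - 1)) := mul_nonneg hd.le hrinv.le
        have hdiq : 0 ≤ δ ^ (p - 2) * K * (1 / (r - 1)) * q := mul_nonneg hdi hq0
        have haq : 0 ≤ δ ^ p * q := mul_nonneg hδp.le hq0
        rw [show δ ^ (p - 2) * K / (r - 1) * q = δ ^ (p - 2) * K * (1 / (r - 1)) * q by ring]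
        generalize 1 / (r - 1) = i at hCq hdi hdiq ⊢
        linarith [h1, hCq, hd, hdi, hdiq, haq]

end TMS

open TMS

theorem truncated_moment_summable {Ω : Type*} [MeasurableSpace Ω]
    (P : Measure Ω) [IsProbabilityMeasure P]
    (X : Ω → ℝ) (hmeas : Measurable X) (hnonneg : ∀ ω, 0 ≤ X ω)
    (hint : Integrable (fun ω => X ω ^ 2 / loglog (X ω)) P) :
    ∀ δ p : ℝ, 0 < δ → 2 < p →
      Summable (fun n : ℕ =>
        (∫ ω, (min (X ω) (δ * Real.sqrt ((n + 1) * loglog (n + 1)))) ^ p ∂P) /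
          ((n + 1) * loglog (n + 1)) ^ (p / 2)) := by
  intro δ p hδ hp
  have hp0 : (0:ℝ) ≤ p := by linarith
  obtain ⟨C, hC, hbound⟩ := main_bound δ p hδ hp
  classical
  set F : ℕ → Ω → ℝ := fun n ω =>
    (min (X ω) (δ * Real.sqrt (((n : ℝ) + 1) * loglog ((n : ℝ) + 1)))) ^ p /
      (((n : ℝ) + 1) * loglog ((n : ℝ) + 1)) ^ (p / 2) with hFdef
  have hFmeas : ∀ n, Measurable (F n) := by
    intro n
    apply Measurable.div_const
    exact ((Real.continuous_rpow_const hp0).measurable).comp (hmeas.min measurable_const)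
  have hanonneg : ∀ n : ℕ, (0:ℝ) ≤ δ * Real.sqrt (((n : ℝ) + 1) * loglog ((n : ℝ) + 1)) :=
    fun n => mul_nonneg hδ.le (Real.sqrt_nonneg _)
  have hbnonneg : ∀ n : ℕ, (0:ℝ) ≤ ((n : ℝ) + 1) * loglog ((n : ℝ) + 1) := fun n =>
    mul_nonneg (by positivity) (loglog_pos _).le
  have hFnonneg : ∀ n ω, 0 ≤ F n ω := fun n ω =>
    div_nonneg (Real.rpow_nonneg (le_min (hnonneg ω) (hanonneg n)) p)
      (Real.rpow_nonneg (hbnonneg n) _)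
  set T : ℕ → ENNReal := fun n => ∫⁻ ω, ENNReal.ofReal (F n ω) ∂P with hTdef
  have hh0 : ∀ ω, 0 ≤ X ω ^ 2 / loglog (X ω) := fun ω =>
    div_nonneg (sq_nonneg _) (loglog_pos _).le
  have hptwise : ∀ ω, ∑' n, ENNReal.ofReal (F n ω)
      ≤ ENNReal.ofReal (C * (1 + X ω ^ 2 / loglog (X ω))) := by
    intro ω
    rw [ENNReal.tsum_eq_iSup_sum]
    apply iSup_le
    intro s
    rw [← ENNReal.ofReal_sum_of_nonneg (fun n _ => hFnonneg n ω)]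
    exact ENNReal.ofReal_le_ofReal (hbound (X ω) (hnonneg ω) s)
  have hTsum : ∑' n, T n ≠ ⊤ := by
    have h1 : ∑' n, T n = ∫⁻ ω, ∑' n, ENNReal.ofReal (F n ω) ∂P :=
      (MeasureTheory.lintegral_tsum (fun n => ((hFmeas n).ennreal_ofReal).aemeasurable)).symm
    have h3 : ∀ ω, ENNReal.ofReal (C * (1 + X ω ^ 2 / loglog (X ω)))
        ≤ ENNReal.ofReal C * (1 + ENNReal.ofReal (X ω ^ 2 / loglog (X ω))) := by
      intro ω
      rw [ENNReal.ofReal_mul hC.le, ENNReal.ofReal_add one_pos.le (hh0 ω), ENNReal.ofReal_one]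
    have h4 : ∫⁻ ω, ENNReal.ofReal C * (1 + ENNReal.ofReal (X ω ^ 2 / loglog (X ω))) ∂P
        = ENNReal.ofReal C * (1 + ∫⁻ ω, ENNReal.ofReal (X ω ^ 2 / loglog (X ω)) ∂P) := by
      rw [MeasureTheory.lintegral_const_mul' _ _ ENNReal.ofReal_ne_top]
      congr 1
      rw [MeasureTheory.lintegral_add_left measurable_const]
      simp [MeasureTheory.lintegral_one, measure_univ]
    have h5 : ∫⁻ ω, ENNReal.ofReal (X ω ^ 2 / loglog (X ω)) ∂P < ⊤ := by
      refine lt_of_le_of_lt (MeasureTheory.lintegral_mono fun ω => ?_)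
        hint.hasFiniteIntegral
      exact Real.ofReal_le_enorm _
    rw [h1]
    have h6 : ∫⁻ ω, ∑' n, ENNReal.ofReal (F n ω) ∂P
        ≤ ENNReal.ofReal C * (1 + ∫⁻ ω, ENNReal.ofReal (X ω ^ 2 / loglog (X ω)) ∂P) := by
      rw [← h4]
      exact le_trans (MeasureTheory.lintegral_mono fun ω => hptwise ω)
        (MeasureTheory.lintegral_mono fun ω => h3 ω)
    refine ne_top_of_le_ne_top ?_ h6
    apply ENNReal.mul_ne_top ENNReal.ofReal_ne_top
    exact ENNReal.add_ne_top.2 ⟨ENNReal.one_ne_top, h5.ne⟩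
  have hsummable : Summable (fun n => (T n).toReal) := ENNReal.summable_toReal hTsum
  apply hsummable.congr
  intro n
  have h7 : ∫ ω, F n ω ∂P = (T n).toReal := by
    rw [hTdef]
    exact MeasureTheory.integral_eq_lintegral_of_nonneg_ae
      (Filter.Eventually.of_forall (fun ω => hFnonneg n ω)) (hFmeas n).aestronglyMeasurable
  have h8 : ∫ ω, F n ω ∂P
      = (∫ ω, (min (X ω) (δ * Real.sqrt (((n : ℝ) + 1) * loglog ((n : ℝ) + 1)))) ^ p ∂P) /
        (((n : ℝ) + 1) * loglog ((n : ℝ) + 1)) ^ (p / 2) := by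
    simp only [hFdef]
    exact MeasureTheory.integral_div _ _
  rw [← h7, h8]
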